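/- For a bridge x = (x(0), …, x(k)) with x(0) = 0, x(k) = −1 and all increments ≥ −1, the Vervaat transform V(x) (the cyclic shift starting at the first time x attains its overall minimum) is an excursion: V(x)(0) = 0, V(x) has all increments ≥ −1, V(x)(j) ≥ 0 for 0 ≤ j ≤ k−1, and V(x)(k) = −1. -/

import Mathlib

/-- Partial sum: the position after `j` steps of the walk with increment list `s`. -/
def psum (s : List ℤ) (j : ℕ) : ℤ := (s.take j).sum

/-- Vervaat's transformation: if `s` is the increment list of a bridge of length `k ≥ 1`
(all increments `≥ -1`, total sum `-1`) and `τ` is the first time the walk attains its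
overall minimum, then the cyclic shift `s.rotate τ` is the increment list of an excursion:
increments `≥ -1`, all partial sums before time `k` non-negative, and total sum `-1`. -/
theorem stmt_16 (k : ℕ) (hk : 1 ≤ k) (s : List ℤ) (hlen : s.length = k)
    (hinc : ∀ a ∈ s, -1 ≤ a) (hsum : s.sum = -1)
    (τ : ℕ) (hτ1 : 1 ≤ τ) (hτk : τ ≤ k)
    (hmin : ∀ j, 1 ≤ j → j ≤ k → psum s τ ≤ psum s j)
    (hfirst : ∀ j, 1 ≤ j → j < τ → psum s τ < psum s j) :
    (∀ a ∈ s.rotate τ, -1 ≤ a) ∧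
    (∀ j, j < k → 0 ≤ psum (s.rotate τ) j) ∧
    (s.rotate τ).sum = -1 := by
  subst hlen
  refine ⟨fun a ha => hinc a ((s.rotate_perm τ).mem_iff.mp ha), ?_,
    by rw [(s.rotate_perm τ).sum_eq, hsum]⟩
  intro j hj
  have hrot : s.rotate τ = s.drop τ ++ s.take τ :=
    List.rotate_eq_drop_append_take hτk
  have hdl : (s.drop τ).length = s.length - τ := List.length_drop
  by_cases hcase : j ≤ s.length - τ
  · have ht : (s.rotate τ).take j = (s.drop τ).take j := by
      rw [hrot, List.take_append_of_le_length (by omega)]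
    have key : psum s (τ + j) = psum s τ + ((s.drop τ).take j).sum := by
      unfold psum; rw [List.take_add, List.sum_append]
    have h1 := hmin (τ + j) (by omega) (by omega)
    unfold psum at *
    rw [ht]
    linarith
  · set m := j - (s.length - τ) with hm
    have hm1 : 1 ≤ m := by omega
    have hm2 : m < τ := by omega
    have ht : (s.rotate τ).take j = s.drop τ ++ s.take m := by
      rw [hrot, List.take_append,
        List.take_of_length_le (by omega), List.take_take]
      congr 2
      omega
    have hds : (s.drop τ).sum = s.sum - (s.take τ).sum := by
      have := congrArg List.sum (List.take_append_drop τ s)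
      rw [List.sum_append] at this
      linarith
    have h2 := hfirst m hm1 hm2
    unfold psum at *
    rw [ht, List.sum_append, hds, hsum]
    linarith
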